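/- arXiv:1512.07985 — 2 statements merged into one kernel-verified Lean document; each statement's English description precedes it below -/
import Mathlib

section
/- Let y ∈ ℝ, a > 0, and suppose φ : [y-a, y+a] → ℝ is continuously differentiable with |φ'(z)| ≥ C/2 > 0 for all z in [y-a, y+a]. Then |∫_{y-a}^{y+a} exp(-(z-y)^2/(4h)) · exp(i φ(z)/h) dz| = O(h) as h → 0⁺. -/
open intervalIntegral Set MeasureTheory

private lemma stmt4_key (y a C M h : ℝ) (ha : 0 < a) (hC : 0 < C) (hh : 0 < h)
    (hM0 : 0 ≤ M) (φ : ℝ → ℝ)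
    (hφ : ContDiffOn ℝ 2 φ (Set.Icc (y - a) (y + a)))
    (hφ' : ∀ z ∈ Set.Icc (y - a) (y + a), C / 2 ≤ |deriv φ z|)
    (hφ'' : ∀ z ∈ Set.Icc (y - a) (y + a), |deriv (deriv φ) z| ≤ M) :
    ‖∫ z in (y - a)..(y + a),
        (Real.exp (-(z - y)^2 / (4 * h)) : ℂ) * Complex.exp (Complex.I * φ z / h)‖
      ≤ (8 / C + 8 * a * M / C ^ 2) * h := by
  have hab : y - a ≤ y + a := by linarith
  have hab' : y - a < y + a := by linarith
  have hCne : C ≠ 0 := ne_of_gt hC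
  have hhne : h ≠ 0 := ne_of_gt hh
  have hhC : (h : ℂ) ≠ 0 := Complex.ofReal_ne_zero.mpr hhne
  set S := Set.Icc (y - a) (y + a) with hS
  set g : ℝ → ℝ := fun z => Real.exp (-(z - y) ^ 2 / (4 * h)) with hgdef
  set g' : ℝ → ℝ := fun z => -(z - y) / (2 * h) * g z with hg'def
  have hgderiv : ∀ z : ℝ, HasDerivAt g (g' z) z := by
    intro z
    have h0 : HasDerivAt (fun z : ℝ => z - y) 1 z := (hasDerivAt_id z).sub_const y
    have h1 : HasDerivAt (fun z : ℝ => -(z - y) ^ 2 / (4 * h)) (-(z - y) / (2 * h)) z := by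
      have := ((h0.pow 2).neg).div_const (4 * h)
      exact this.congr_deriv (by ring)
    have := h1.exp
    simpa [hgdef, hg'def, mul_comm] using this
  have hg0 : ∀ z, 0 < g z := fun z => Real.exp_pos _
  have hg1 : ∀ z, g z ≤ 1 := by
    intro z
    rw [hgdef]
    apply Real.exp_le_one_iff.mpr
    apply div_nonpos_of_nonpos_of_nonneg
    · simpa using sq_nonneg (z - y)
    · positivity
  -- φ is differentiable at every point of S (deriv would be 0 otherwise)
  have hψdiff : ∀ z ∈ S, DifferentiableAt ℝ φ z := by
    intro z hz
    by_contra hcon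
    have h2 := hφ' z hz
    rw [deriv_zero_of_not_differentiableAt hcon] at h2
    simp at h2
    linarith
  set ψ : ℝ → ℝ := deriv φ with hψdef
  have hψne : ∀ z ∈ S, ψ z ≠ 0 := by
    intro z hz h0
    have := hφ' z hz
    rw [show ψ z = 0 from h0] at this
    simp at this
    linarith
  have hIψne : ∀ z ∈ S, Complex.I * (ψ z : ℂ) ≠ 0 := by
    intro z hz
    exact mul_ne_zero Complex.I_ne_zero (Complex.ofReal_ne_zero.mpr (hψne z hz))
  have hψcont : ContinuousOn ψ S := by
    have h1 := hφ.continuousOn_derivWithin (uniqueDiffOn_Icc hab') one_le_two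
    exact h1.congr fun z hz =>
      ((hψdiff z hz).derivWithin ((uniqueDiffOn_Icc hab') z hz)).symm
  set T := Set.Ioo (y - a) (y + a) with hT
  have hTS : T ⊆ S := Set.Ioo_subset_Icc_self
  have hφT : ContDiffOn ℝ 2 φ T := hφ.mono hTS
  have hψC1 : ContDiffOn ℝ 1 ψ T := hφT.deriv_of_isOpen isOpen_Ioo (by norm_num)
  have hχ : ∀ z ∈ T, HasDerivAt ψ (deriv ψ z) z := by
    intro z hz
    exact ((hψC1.differentiableOn one_ne_zero).differentiableAt
      (isOpen_Ioo.mem_nhds hz)).hasDerivAt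
  have hχcont : ContinuousOn (deriv ψ) T :=
    hψC1.continuousOn_deriv_of_isOpen isOpen_Ioo le_rfl
  -- the oscillatory factor
  set F : ℝ → ℂ := fun z => Complex.exp (Complex.I * φ z / h) with hFdef
  have hFnorm : ∀ z, ‖F z‖ = 1 := by
    intro z
    have : Complex.I * (φ z : ℂ) / (h : ℂ) = ((φ z / h : ℝ) : ℂ) * Complex.I := by
      push_cast; ring
    rw [hFdef]
    simp only [this]
    exact Complex.norm_exp_ofReal_mul_I _
  have hφcontC : ContinuousOn (fun z : ℝ => (Complex.I * (φ z : ℂ) / h)) S := by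
    apply ContinuousOn.div_const
    exact continuousOn_const.mul (Complex.continuous_ofReal.comp_continuousOn hφ.continuousOn)
  have hFcont : ContinuousOn F S := Complex.continuous_exp.comp_continuousOn hφcontC
  have hFderiv : ∀ z ∈ S, HasDerivAt F (Complex.I * ψ z / h * F z) z := by
    intro z hz
    have h1 : HasDerivAt (fun z : ℝ => ((φ z : ℝ) : ℂ)) ((ψ z : ℂ)) z :=
      ((hψdiff z hz).hasDerivAt).ofReal_comp
    have h2 : HasDerivAt (fun z : ℝ => Complex.I * (φ z : ℂ) / h)
        (Complex.I * (ψ z : ℂ) / h) z := by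
      simpa [mul_div_assoc] using (h1.const_mul Complex.I).div_const (h : ℂ)
    simpa [hFdef, mul_comm] using h2.cexp
  -- G and its derivative
  set G : ℝ → ℂ := fun z => (h : ℂ) * ((g z : ℂ) * (Complex.I * (ψ z : ℂ))⁻¹) with hGdef
  set G' : ℝ → ℂ := fun z => (h : ℂ) * ((g' z : ℂ) * (Complex.I * (ψ z : ℂ))⁻¹
      + (g z : ℂ) * (-((Complex.I * (ψ z : ℂ)) ^ 2)⁻¹ * (Complex.I * ((deriv ψ z : ℝ) : ℂ)))) with hG'def
  have hGderiv : ∀ z ∈ T, HasDerivAt G (G' z) z := by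
    intro z hz
    have hzS : z ∈ S := hTS hz
    have h1 : HasDerivAt (fun z : ℝ => ((g z : ℝ) : ℂ)) ((g' z : ℂ)) z :=
      (hgderiv z).ofReal_comp
    have h2 : HasDerivAt (fun z : ℝ => Complex.I * (ψ z : ℂ))
        (Complex.I * ((deriv ψ z : ℝ) : ℂ)) z := ((hχ z hz).ofReal_comp).const_mul Complex.I
    have h3 := (hasDerivAt_inv (hIψne z hzS)).comp z h2
    have h3' : HasDerivAt (fun z : ℝ => (Complex.I * (ψ z : ℂ))⁻¹)
        (-((Complex.I * (ψ z : ℂ)) ^ 2)⁻¹ * (Complex.I * ((deriv ψ z : ℝ) : ℂ))) z := h3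
    exact (h1.mul h3').const_mul (h : ℂ)
  set P : ℝ → ℂ := fun z => G z * F z with hPdef
  have hPderiv : ∀ z ∈ T, HasDerivAt P (G' z * F z + (g z : ℂ) * F z) z := by
    intro z hz
    have hzS : z ∈ S := hTS hz
    have h1 := (hGderiv z hz).mul (hFderiv z hzS)
    have h2 : G z * (Complex.I * (ψ z : ℂ) / h * F z) = (g z : ℂ) * F z := by
      rw [hGdef]
      field_simp [hIψne z hzS, Complex.ofReal_ne_zero.mpr (hψne z hzS)]
    rw [hPdef]
    exact h1.congr_deriv (by rw [h2])
  have hgcontC : Continuous (fun z : ℝ => ((g z : ℝ) : ℂ)) := by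
    apply Complex.continuous_ofReal.comp
    rw [hgdef]
    exact Real.continuous_exp.comp
      (((continuous_id.sub continuous_const).pow 2).neg.div_const _)
  have hIψcont : ContinuousOn (fun z : ℝ => Complex.I * (ψ z : ℂ)) S :=
    continuousOn_const.mul (Complex.continuous_ofReal.comp_continuousOn hψcont)
  have hPcont : ContinuousOn P S := by
    apply ContinuousOn.mul _ hFcont
    exact continuousOn_const.mul (hgcontC.continuousOn.mul (hIψcont.inv₀ hIψne))
  -- pointwise norm bounds
  have hinv_bnd : ∀ z ∈ S, ‖(Complex.I * (ψ z : ℂ))⁻¹‖ ≤ 2 / C := by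
    intro z hz
    rw [norm_inv, norm_mul, Complex.norm_I, one_mul, Complex.norm_real, Real.norm_eq_abs]
    calc |ψ z|⁻¹ ≤ (C / 2)⁻¹ := by
          apply inv_anti₀ (by positivity) (hφ' z hz)
      _ = 2 / C := by rw [inv_div]
  have hg'abs : ∀ z, ‖(g' z : ℂ)‖ = |z - y| / (2 * h) * g z := by
    intro z
    rw [Complex.norm_real, Real.norm_eq_abs, hg'def]
    rw [abs_mul, abs_div, abs_neg, abs_of_pos (hg0 z), abs_of_pos (by positivity : (0:ℝ) < 2 * h)]
  set B : ℝ → ℝ := fun z => 1 / C * (|z - y| * g z) + 4 * h * M / C ^ 2 * g z with hBdef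
  have hBnd : ∀ z ∈ S, ‖G' z * F z‖ ≤ B z := by
    intro z hz
    rw [norm_mul, hFnorm, mul_one]
    have e1 : ‖(g' z : ℂ) * (Complex.I * (ψ z : ℂ))⁻¹‖ ≤ |z - y| / (2 * h) * g z * (2 / C) := by
      rw [norm_mul, hg'abs]
      apply mul_le_mul_of_nonneg_left (hinv_bnd z hz) (by positivity)
    have e2 : ‖(g z : ℂ) * (-((Complex.I * (ψ z : ℂ)) ^ 2)⁻¹ *
        (Complex.I * ((deriv ψ z : ℝ) : ℂ)))‖ ≤ g z * (4 / C ^ 2 * M) := by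
      simp only [norm_mul, norm_neg, norm_inv, norm_pow, Complex.norm_I, one_mul,
        Complex.norm_real, Real.norm_eq_abs]
      rw [abs_of_pos (hg0 z)]
      apply mul_le_mul_of_nonneg_left _ (le_of_lt (hg0 z))
      have p1 : (|ψ z| ^ 2)⁻¹ ≤ 4 / C ^ 2 := by
        calc (|ψ z| ^ 2)⁻¹ ≤ ((C / 2) ^ 2)⁻¹ := by
              apply inv_anti₀ (by positivity)
              apply pow_le_pow_left₀ (by positivity) (hφ' z hz)
          _ = 4 / C ^ 2 := by rw [div_pow, inv_div]; norm_num
      calc (|ψ z| ^ 2)⁻¹ * |deriv ψ z| ≤ (4 / C ^ 2) * M := by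
            apply mul_le_mul p1 (hφ'' z hz) (abs_nonneg _) (by positivity)
        _ = 4 / C ^ 2 * M := rfl
    calc ‖G' z‖ ≤ ‖(h : ℂ)‖ * (‖(g' z : ℂ) * (Complex.I * (ψ z : ℂ))⁻¹‖ +
          ‖(g z : ℂ) * (-((Complex.I * (ψ z : ℂ)) ^ 2)⁻¹ *
            (Complex.I * ((deriv ψ z : ℝ) : ℂ)))‖) := by
          rw [hG'def, norm_mul]
          exact mul_le_mul_of_nonneg_left (norm_add_le _ _) (norm_nonneg _)
      _ ≤ h * (|z - y| / (2 * h) * g z * (2 / C) + g z * (4 / C ^ 2 * M)) := by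
          rw [Complex.norm_real, Real.norm_eq_abs, abs_of_pos hh]
          exact mul_le_mul_of_nonneg_left (add_le_add e1 e2) (le_of_lt hh)
      _ = B z := by rw [hBdef]; field_simp
  -- integrability
  have hgcont : Continuous g := by
    rw [hgdef]
    exact Real.continuous_exp.comp (((continuous_id.sub continuous_const).pow 2).neg.div_const _)
  have hg'cont : Continuous g' := by
    rw [hg'def]
    exact ((continuous_id.sub continuous_const).neg.div_const _).mul hgcont
  have hgFint : IntervalIntegrable (fun z => ((g z : ℝ) : ℂ) * F z) volume (y - a) (y + a) :=
    ContinuousOn.intervalIntegrable_of_Icc hab (hgcontC.continuousOn.mul hFcont)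
  have hG'Fcont : ContinuousOn (fun z => G' z * F z) T := by
    apply ContinuousOn.mul _ (hFcont.mono hTS)
    simp only [hG'def]
    apply continuousOn_const.mul
    apply ContinuousOn.add
    · exact ((Complex.continuous_ofReal.comp hg'cont).continuousOn).mul
        ((hIψcont.mono hTS).inv₀ fun z hz => hIψne z (hTS hz))
    · apply hgcontC.continuousOn.mul
      apply ContinuousOn.mul
      · apply ContinuousOn.neg
        exact ContinuousOn.inv₀ ((hIψcont.mono hTS).pow 2)
          fun z hz => pow_ne_zero 2 (hIψne z (hTS hz))
      · exact continuousOn_const.mul (Complex.continuous_ofReal.comp_continuousOn hχcont)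
  have habs_le : ∀ z ∈ S, |z - y| ≤ a := by
    intro z hz
    rw [abs_le]
    constructor <;> [linarith [hz.1]; linarith [hz.2]]
  have hG'Fint : IntervalIntegrable (fun z => G' z * F z) volume (y - a) (y + a) := by
    rw [intervalIntegrable_iff_integrableOn_Ioo_of_le hab]
    constructor
    · exact hG'Fcont.aestronglyMeasurable measurableSet_Ioo
    · apply MeasureTheory.HasFiniteIntegral.restrict_of_bounded
        (1 / C * a + 4 * h * M / C ^ 2) measure_Ioo_lt_top
      filter_upwards [ae_restrict_mem measurableSet_Ioo] with t ht
      have h1 := hBnd t (hTS ht)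
      have h2 : B t ≤ 1 / C * a + 4 * h * M / C ^ 2 := by
        rw [hBdef]
        have h3 := habs_le t (hTS ht)
        have h4 := hg1 t
        have h5 := hg0 t
        have c1 : 1 / C * (|t - y| * g t) ≤ 1 / C * a := by
          apply mul_le_mul_of_nonneg_left _ (by positivity)
          calc |t - y| * g t ≤ |t - y| * 1 := by
                exact mul_le_mul_of_nonneg_left h4 (abs_nonneg _)
            _ = |t - y| := mul_one _
            _ ≤ a := h3
        have c2 : 4 * h * M / C ^ 2 * g t ≤ 4 * h * M / C ^ 2 := by
          calc 4 * h * M / C ^ 2 * g t ≤ 4 * h * M / C ^ 2 * 1 := by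
                apply mul_le_mul_of_nonneg_left h4 (by positivity)
            _ = 4 * h * M / C ^ 2 := mul_one _
        linarith
      exact le_trans h1 h2
  -- FTC / integration by parts
  have hFTC := integral_eq_sub_of_hasDerivAt_of_le hab hPcont hPderiv (hG'Fint.add hgFint)
  have hkey : (∫ z in (y - a)..(y + a), ((g z : ℝ) : ℂ) * F z)
      = P (y + a) - P (y - a) - ∫ z in (y - a)..(y + a), G' z * F z := by
    rw [intervalIntegral.integral_add hG'Fint hgFint] at hFTC
    linear_combination hFTC
  -- boundary bound
  have hPbnd : ∀ z ∈ S, ‖P z‖ ≤ 2 / C * h := by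
    intro z hz
    rw [hPdef, norm_mul, hFnorm, mul_one, hGdef, norm_mul, norm_mul,
      Complex.norm_real, Complex.norm_real, Real.norm_eq_abs, Real.norm_eq_abs,
      abs_of_pos hh, abs_of_pos (hg0 z)]
    calc h * (g z * ‖(Complex.I * (ψ z : ℂ))⁻¹‖) ≤ h * (1 * (2 / C)) := by
          apply mul_le_mul_of_nonneg_left _ (le_of_lt hh)
          exact mul_le_mul (hg1 z) (hinv_bnd z hz) (norm_nonneg _) one_pos.le
      _ = 2 / C * h := by ring
  -- moment integral: ∫ |z-y| g ≤ 4h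
  have hgy : g y = 1 := by rw [hgdef]; simp
  have hA1 : ∀ z : ℝ, HasDerivAt (fun w => -(2 * h) * g w) ((z - y) * g z) z := by
    intro z
    have := (hgderiv z).const_mul (-(2 * h))
    refine this.congr_deriv ?_
    rw [hg'def]
    field_simp
  have hA2 : ∀ z : ℝ, HasDerivAt (fun w => 2 * h * g w) (-(z - y) * g z) z := by
    intro z
    have := (hgderiv z).const_mul (2 * h)
    refine this.congr_deriv ?_
    rw [hg'def]
    field_simp
  have hmgcont : Continuous fun z => |z - y| * g z :=
    ((continuous_id.sub continuous_const).abs).mul hgcont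
  have hright : ∫ z in y..(y + a), |z - y| * g z ≤ 2 * h := by
    have heq : Set.EqOn (fun z => |z - y| * g z) (fun z => (z - y) * g z)
        (Set.uIcc y (y + a)) := by
      intro z hz
      rw [Set.uIcc_of_le (by linarith)] at hz
      simp only
      rw [abs_of_nonneg (by linarith [hz.1])]
    rw [intervalIntegral.integral_congr heq]
    rw [integral_eq_sub_of_hasDerivAt (fun z _ => hA1 z)
      (((continuous_id.sub continuous_const).mul hgcont).intervalIntegrable _ _)]
    have := hg0 (y + a)
    simp only [hgy]
    nlinarith
  have hleft : ∫ z in (y - a)..y, |z - y| * g z ≤ 2 * h := by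
    have heq : Set.EqOn (fun z => |z - y| * g z) (fun z => -(z - y) * g z)
        (Set.uIcc (y - a) y) := by
      intro z hz
      rw [Set.uIcc_of_le (by linarith)] at hz
      simp only
      rw [abs_of_nonpos (by linarith [hz.2])]
    rw [intervalIntegral.integral_congr heq]
    rw [integral_eq_sub_of_hasDerivAt (fun z _ => hA2 z)
      (((continuous_id.sub continuous_const).neg.mul hgcont).intervalIntegrable _ _)]
    have := hg0 (y - a)
    simp only [hgy]
    nlinarith
  have hmomint1 : IntervalIntegrable (fun z => |z - y| * g z) volume (y - a) y :=
    hmgcont.intervalIntegrable _ _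
  have hmomint2 : IntervalIntegrable (fun z => |z - y| * g z) volume y (y + a) :=
    hmgcont.intervalIntegrable _ _
  have hmom : ∫ z in (y - a)..(y + a), |z - y| * g z ≤ 4 * h := by
    rw [← intervalIntegral.integral_add_adjacent_intervals hmomint1 hmomint2]
    linarith
  have hIg : ∫ z in (y - a)..(y + a), g z ≤ 2 * a := by
    calc ∫ z in (y - a)..(y + a), g z ≤ ∫ _z in (y - a)..(y + a), (1 : ℝ) := by
          apply intervalIntegral.integral_mono_on hab (hgcont.intervalIntegrable _ _)
            intervalIntegrable_const
          exact fun z _ => hg1 z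
      _ = 2 * a := by simp; ring
  have hBcont : Continuous B := by
    rw [hBdef]
    exact (continuous_const.mul hmgcont).add (continuous_const.mul hgcont)
  have hBint : IntervalIntegrable B volume (y - a) (y + a) := hBcont.intervalIntegrable _ _
  have hBnonneg : ∀ z, 0 ≤ B z := by
    intro z
    rw [hBdef]
    have := hg0 z
    have := abs_nonneg (z - y)
    positivity
  have hIB : ∫ z in (y - a)..(y + a), B z ≤ 1 / C * (4 * h) + 4 * h * M / C ^ 2 * (2 * a) := by
    rw [hBdef]
    rw [intervalIntegral.integral_add (by exact (continuous_const.mul hmgcont).intervalIntegrable _ _)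
      (by exact (continuous_const.mul hgcont).intervalIntegrable _ _)]
    rw [intervalIntegral.integral_const_mul, intervalIntegral.integral_const_mul]
    have t1 : 1 / C * ∫ z in (y - a)..(y + a), |z - y| * g z ≤ 1 / C * (4 * h) :=
      mul_le_mul_of_nonneg_left hmom (by positivity)
    have t2 : 4 * h * M / C ^ 2 * ∫ z in (y - a)..(y + a), g z
        ≤ 4 * h * M / C ^ 2 * (2 * a) :=
      mul_le_mul_of_nonneg_left hIg (by positivity)
    linarith
  have hnormG'F : ‖∫ z in (y - a)..(y + a), G' z * F z‖
      ≤ 1 / C * (4 * h) + 4 * h * M / C ^ 2 * (2 * a) := by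
    have h1 : ‖∫ z in (y - a)..(y + a), G' z * F z‖ ≤ |∫ z in (y - a)..(y + a), B z| := by
      refine le_trans (intervalIntegral.norm_integral_le_of_norm_le hab
        (Filter.Eventually.of_forall fun t ht => hBnd t ⟨le_of_lt ht.1, ht.2⟩) hBint) (le_abs_self _)
    rw [abs_of_nonneg (intervalIntegral.integral_nonneg hab fun z _ => hBnonneg z)] at h1
    linarith
  -- conclusion
  have hfin : ‖∫ z in (y - a)..(y + a), ((g z : ℝ) : ℂ) * F z‖
      ≤ (8 / C + 8 * a * M / C ^ 2) * h := by
    rw [hkey]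
    have n1 : ‖P (y + a) - P (y - a) - ∫ z in (y - a)..(y + a), G' z * F z‖
        ≤ ‖P (y + a)‖ + ‖P (y - a)‖ + ‖∫ z in (y - a)..(y + a), G' z * F z‖ := by
      calc ‖P (y + a) - P (y - a) - ∫ z in (y - a)..(y + a), G' z * F z‖
          ≤ ‖P (y + a) - P (y - a)‖ + ‖∫ z in (y - a)..(y + a), G' z * F z‖ :=
            norm_sub_le _ _
        _ ≤ ‖P (y + a)‖ + ‖P (y - a)‖ + ‖∫ z in (y - a)..(y + a), G' z * F z‖ := by
            have := norm_sub_le (P (y + a)) (P (y - a))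
            linarith
    have b1 : ‖P (y + a)‖ ≤ 2 / C * h :=
      hPbnd _ (by constructor <;> [linarith; linarith])
    have b2 : ‖P (y - a)‖ ≤ 2 / C * h :=
      hPbnd _ (by constructor <;> [linarith; linarith])
    have : (2 / C * h) + (2 / C * h) + (1 / C * (4 * h) + 4 * h * M / C ^ 2 * (2 * a))
        = (8 / C + 8 * a * M / C ^ 2) * h := by ring
    linarith
  exact hfin

open intervalIntegral in
/-- Non-stationary phase, one integration by parts: if `φ` is `C²` on `[y-a, y+a]`
with `|φ'| ≥ C/2 > 0` and `|φ''| ≤ M` there, then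
`|∫_{y-a}^{y+a} exp(-(z-y)²/(4h)) · exp(iφ(z)/h) dz| = O(h)` as `h → 0⁺`. -/
theorem stmt4 (y a C M : ℝ) (ha : 0 < a) (hC : 0 < C) (φ : ℝ → ℝ)
    (hφ : ContDiffOn ℝ 2 φ (Set.Icc (y - a) (y + a)))
    (hφ' : ∀ z ∈ Set.Icc (y - a) (y + a), C / 2 ≤ |deriv φ z|)
    (hφ'' : ∀ z ∈ Set.Icc (y - a) (y + a), |deriv (deriv φ) z| ≤ M) :
    ∃ K δ : ℝ, 0 < K ∧ 0 < δ ∧ ∀ h : ℝ, 0 < h → h < δ →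
      ‖∫ z in (y - a)..(y + a),
          (Real.exp (-(z - y)^2 / (4 * h)) : ℂ) * Complex.exp (Complex.I * φ z / h)‖
        ≤ K * h := by
  have hM0 : 0 ≤ M := le_trans (abs_nonneg _) (hφ'' y ⟨by linarith, by linarith⟩)
  refine ⟨8 / C + 8 * a * M / C ^ 2, 1, ?_, one_pos, ?_⟩
  · have h1 : (0 : ℝ) < 8 / C := by positivity
    have h2 : (0 : ℝ) ≤ 8 * a * M / C ^ 2 :=
      div_nonneg (mul_nonneg (by positivity) hM0) (by positivity)
    linarith
  · intro h hh _
    exact stmt4_key y a C M h ha hC hh hM0 φ hφ hφ' hφ''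
end

section
/- Let λ = 1/2, A : S¹ → ℝ continuous, and define u(x) = sup over a ∈ {1,2}^ℕ of s(x,a), where s(x,a) = Σ_{k=0}^∞ (1/2)^k A((τ_{a_k} ∘ ⋯ ∘ τ_{a_0})(x)). Then u is a (1/2)-calibrated plus-subaction: for all z ∈ S¹, u(z) = max over y with f(y) = z of ((1/2)u(y) + A(y)), where f(z) = 2z mod 1. -/
/-- The inverse branches `τ₁(x) = x/2` and `τ₂(x) = x/2 + 1/2` of the doubling map,
indexed by `Fin 2`. -/
noncomputable def branch (i : Fin 2) (x : ℝ) : ℝ := x / 2 + (i : ℕ) / 2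

/-- `branchComp a x k = (τ_{a_k} ∘ ⋯ ∘ τ_{a_0})(x)`. -/
noncomputable def branchComp (a : ℕ → Fin 2) (x : ℝ) : ℕ → ℝ
  | 0 => branch (a 0) x
  | k + 1 => branch (a (k + 1)) (branchComp a x k)

/-- `s(x,a) = Σ_k (1/2)^k A((τ_{a_k}∘⋯∘τ_{a_0})(x))`. -/
noncomputable def sFun (A : ℝ → ℝ) (x : ℝ) (a : ℕ → Fin 2) : ℝ :=
  ∑' k : ℕ, (1 / 2 : ℝ) ^ k * A (branchComp a x k)

lemma branchComp_shift (a : ℕ → Fin 2) (x : ℝ) (k : ℕ) :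
    branchComp a x (k + 1) = branchComp (fun n => a (n + 1)) (branch (a 0) x) k := by
  induction k with
  | zero => rfl
  | succ k ih => rw [branchComp, ih]; rfl

section bounded
variable {A : ℝ → ℝ} {C : ℝ}

lemma sum_summable (hC : ∀ x, |A x| ≤ C) (x : ℝ) (a : ℕ → Fin 2) :
    Summable (fun k => (1 / 2 : ℝ) ^ k * A (branchComp a x k)) := by
  apply Summable.of_norm_bounded (g := fun k => (1 / 2 : ℝ) ^ k * C)
  · exact (summable_geometric_of_lt_one (by norm_num) (by norm_num)).mul_right C
  · intro k
    rw [norm_mul, norm_pow]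
    have h1 : ‖(1/2 : ℝ)‖ = 1/2 := by norm_num
    rw [h1]
    exact mul_le_mul_of_nonneg_left ((Real.norm_eq_abs _) ▸ hC _) (by positivity)

lemma sFun_le (hC : ∀ x, |A x| ≤ C) (x : ℝ) (a : ℕ → Fin 2) : |sFun A x a| ≤ 2 * C := by
  have h := sum_summable hC x a
  have habs : Summable (fun k : ℕ => ‖(1 / 2 : ℝ) ^ k * A (branchComp a x k)‖) := by
    exact h.abs
  have hgeo : Summable (fun k : ℕ => (1 / 2 : ℝ) ^ k * C) :=
    (summable_geometric_of_lt_one (by norm_num) (by norm_num)).mul_right C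
  calc |sFun A x a| = ‖∑' k : ℕ, (1 / 2 : ℝ) ^ k * A (branchComp a x k)‖ :=
        (Real.norm_eq_abs _).symm
    _ ≤ ∑' k : ℕ, ‖(1 / 2 : ℝ) ^ k * A (branchComp a x k)‖ := norm_tsum_le_tsum_norm habs
    _ ≤ ∑' k : ℕ, (1 / 2 : ℝ) ^ k * C := by
        refine habs.tsum_le_tsum (fun k => ?_) hgeo
        rw [norm_mul, norm_pow, Real.norm_eq_abs, Real.norm_eq_abs]
        have h12 : |(1 / 2 : ℝ)| = 1 / 2 := by norm_num
        rw [h12]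
        exact mul_le_mul_of_nonneg_left (hC _) (by positivity)
    _ = 2 * C := by
        rw [tsum_mul_right, tsum_geometric_of_lt_one (by norm_num) (by norm_num)]
        ring

lemma bdd (hC : ∀ x, |A x| ≤ C) (x : ℝ) : BddAbove (Set.range (sFun A x)) := by
  refine ⟨2 * C, ?_⟩
  rintro _ ⟨a, rfl⟩
  exact le_of_abs_le (sFun_le hC x a)

lemma sFun_rec (hC : ∀ x, |A x| ≤ C) (x : ℝ) (a : ℕ → Fin 2) :
    sFun A x a = A (branch (a 0) x)
      + (1 / 2) * sFun A (branch (a 0) x) (fun n => a (n + 1)) := by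
  have h := sum_summable hC x a
  rw [sFun, h.tsum_eq_zero_add]
  have h0 : (1 / 2 : ℝ) ^ 0 * A (branchComp a x 0) = A (branch (a 0) x) := by
    simp [branchComp]
  rw [h0]
  congr 1
  have : ∀ k : ℕ, (1 / 2 : ℝ) ^ (k + 1) * A (branchComp a x (k + 1))
      = (1 / 2) * ((1 / 2 : ℝ) ^ k * A (branchComp (fun n => a (n + 1)) (branch (a 0) x) k)) := by
    intro k
    rw [branchComp_shift, pow_succ]
    ring
  rw [tsum_congr this, tsum_mul_left, sFun]

end bounded

/-- `u(x) = sup_a s(x,a)` is a `(1/2)`-calibrated plus-subaction: for all `z ∈ [0,1)`,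
`u(z) = max_{f(y)=z} ((1/2)u(y) + A(y))`, the two preimages of `z` under the doubling
map being `z/2` and `z/2 + 1/2`. -/
theorem stmt11 (A : ℝ → ℝ) (hA : Continuous A) (hAp : Function.Periodic A 1) :
    ∀ z ∈ Set.Ico (0 : ℝ) 1,
      (⨆ a : ℕ → Fin 2, sFun A z a)
        = max ((1 / 2) * (⨆ a : ℕ → Fin 2, sFun A (z / 2) a) + A (z / 2))
              ((1 / 2) * (⨆ a : ℕ → Fin 2, sFun A (z / 2 + 1 / 2) a) + A (z / 2 + 1 / 2)) := by
  -- boundedness of A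
  obtain ⟨C, hC⟩ : ∃ C, ∀ x, |A x| ≤ C := by
    obtain ⟨C, hC⟩ := (isCompact_Icc (a := (0:ℝ)) (b := 1)).exists_bound_of_continuousOn hA.continuousOn
    refine ⟨C, fun x => ?_⟩
    have h1 : A (Int.fract x) = A x := by
      have h2 := hAp.sub_int_mul_eq (x := x) ⌊x⌋
      rw [mul_one, Int.self_sub_floor] at h2
      exact h2
    rw [← h1]
    simpa [Real.norm_eq_abs] using hC (Int.fract x)
      ⟨(Int.fract_nonneg x), le_of_lt (Int.fract_lt_one x)⟩
  intro z hz
  have hb0 : branch 0 z = z / 2 := by simp [branch]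
  have hb1 : branch 1 z = z / 2 + 1 / 2 := by norm_num [branch]
  apply le_antisymm
  · apply ciSup_le
    intro a
    rw [sFun_rec hC z a]
    set y := branch (a 0) z with hy
    have hle : sFun A y (fun n => a (n + 1)) ≤ ⨆ b, sFun A y b :=
      le_ciSup (bdd hC y) _
    have : A y + 1 / 2 * sFun A y (fun n => a (n + 1))
        ≤ 1 / 2 * (⨆ b, sFun A y b) + A y := by linarith
    refine this.trans ?_
    have h2 : a 0 = 0 ∨ a 0 = 1 := by omega
    rcases h2 with h | h
    · rw [hy, h, hb0]; exact le_max_left _ _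
    · rw [hy, h, hb1]; exact le_max_right _ _
  · have key : ∀ i : Fin 2,
        1 / 2 * (⨆ b, sFun A (branch i z) b) + A (branch i z) ≤ ⨆ a, sFun A z a := by
      intro i
      have h2 : (⨆ b, sFun A (branch i z) b) ≤ 2 * ((⨆ a, sFun A z a) - A (branch i z)) := by
        apply ciSup_le
        intro b
        have hrec := sFun_rec hC z (fun n => Nat.rec i (fun k _ => b k) n)
        have hs : sFun A z (fun n => Nat.rec i (fun k _ => b k) n)
            = A (branch i z) + 1 / 2 * sFun A (branch i z) b := by
          simpa using hrec
        have hle : sFun A z (fun n => Nat.rec i (fun k _ => b k) n) ≤ ⨆ a, sFun A z a :=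
          le_ciSup (bdd hC z) _
        rw [hs] at hle
        linarith
      linarith
    apply max_le
    · simpa [hb0] using key 0
    · simpa [hb1] using key 1
end
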